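/- arXiv:1007.0513 — 5 statements merged into one kernel-verified Lean document; each statement's English description precedes it below -/
import Mathlib

section
/- Let (g, B) be a metric n-Lie algebra and W a subspace of g. Then W is an ideal of g if and only if W⊥ ⊆ C_g(W), where C_g(W) = {x ∈ g | [x, W, g, ..., g] = 0} is the centralizer of W. -/
open Function Submodule

/-- The orthogonal complement of a subspace `W` with respect to a bilinear form `B`. -/
def orthB {g : Type*} [AddCommGroup g] [Module ℂ g]
    (B : g →ₗ[ℂ] g →ₗ[ℂ] ℂ) (W : Submodule ℂ g) : Submodule ℂ g where
  carrier := {x | ∀ w ∈ W, B w x = 0}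
  add_mem' := by
    intro a b ha hb w hw
    simp [ha w hw, hb w hw]
  zero_mem' := by
    intro w hw; simp
  smul_mem' := by
    intro c a ha w hw
    simp [ha w hw]

/-- A metric `n`-Lie algebra over `ℂ`. -/
structure MetricNLie (n : ℕ) [NeZero n] (g : Type*) [AddCommGroup g] [Module ℂ g]
    [FiniteDimensional ℂ g] where
  br : MultilinearMap ℂ (fun _ : Fin n => g) g
  alternating : ∀ (x : Fin n → g) (i j : Fin n), i ≠ j → x i = x j → br x = 0
  fund : ∀ x y : Fin n → g,
    br (update y 0 (br x)) = ∑ i, br (update x i (br (update y 0 (x i))))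
  B : g →ₗ[ℂ] g →ₗ[ℂ] ℂ
  symm : ∀ a b, B a b = B b a
  nondeg : ∀ a, (∀ b, B a b = 0) → a = 0
  inv : ∀ (x : Fin n → g) (a b : g),
    B (br (update x 0 a)) b = - B (br (update x 0 b)) a

namespace MetricNLie

variable {n : ℕ} [NeZero n] {g : Type*} [AddCommGroup g] [Module ℂ g]
  [FiniteDimensional ℂ g] (M : MetricNLie n g)

/-- The center `C(g) = {x | [x, g, ..., g] = 0}`. -/
def center : Submodule ℂ g where
  carrier := {x | ∀ y : Fin n → g, M.br (update y 0 x) = 0}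
  add_mem' := by
    intro a b ha hb y
    rw [M.br.map_update_add, ha y, hb y, add_zero]
  zero_mem' := by
    intro y
    exact M.br.map_coord_zero 0 (by simp)
  smul_mem' := by
    intro c a ha y
    rw [M.br.map_update_smul, ha y, smul_zero]

/-- The derived algebra `g¹ = [g, ..., g]`, the span of all brackets. -/
def derived : Submodule ℂ g := Submodule.span ℂ (Set.range M.br)

/-- A subspace `I` is an ideal if `[I, g, ..., g] ⊆ I`. -/
def IsIdeal (I : Submodule ℂ g) : Prop :=
  ∀ (y : Fin n → g) (v : g), v ∈ I → M.br (update y 0 v) ∈ I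

/-- A subspace `I` is a subalgebra if it is closed under the bracket. -/
def IsSubalgebra (I : Submodule ℂ g) : Prop :=
  ∀ y : Fin n → g, (∀ i, y i ∈ I) → M.br y ∈ I

/-- A subspace `W` is isotropic if `B(W, W) = 0`. -/
def Isotropic (W : Submodule ℂ g) : Prop :=
  ∀ x ∈ W, ∀ y ∈ W, M.B x y = 0

/-- The centralizer `C_g(W) = {x | [x, W, g, ..., g] = 0}` of a subspace `W`. -/
def centralizer (W : Submodule ℂ g) : Set g :=
  {x | ∀ (y : Fin n → g) (w : g), w ∈ W → M.br (update (update y 0 x) 1 w) = 0}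

/-- The subspace `[I, g, ..., g]`, spanned by brackets with one entry in `I`. -/
def bracketIdeal (I : Submodule ℂ g) : Submodule ℂ g :=
  Submodule.span ℂ {z | ∃ (y : Fin n → g) (v : g), v ∈ I ∧ z = M.br (update y 0 v)}

/-- The subspace `[I, ..., I]`, spanned by brackets with all entries in `I`. -/
def bracketAll (I : Submodule ℂ g) : Submodule ℂ g :=
  Submodule.span ℂ {z | ∃ y : Fin n → g, (∀ i, y i ∈ I) ∧ z = M.br y}

/-- The derived series `I⁽⁰⁾ = I`, `I⁽ˢ⁺¹⁾ = [I⁽ˢ⁾, ..., I⁽ˢ⁾]` of a subspace `I`. -/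
def derivedSeries (I : Submodule ℂ g) : ℕ → Submodule ℂ g
  | 0 => I
  | s + 1 => M.bracketAll (derivedSeries I s)

/-- An ideal `I` is solvable if its derived series terminates at `0`. -/
def IsSolvable (I : Submodule ℂ g) : Prop :=
  ∃ r : ℕ, M.derivedSeries I r = ⊥

/-- `r` is the solvable radical: the maximal solvable ideal. -/
def IsRadical (r : Submodule ℂ g) : Prop :=
  M.IsIdeal r ∧ M.IsSolvable r ∧ ∀ I : Submodule ℂ g, M.IsIdeal I → M.IsSolvable I → I ≤ r

/-- An ideal `I` is abelian if `[I, I, g, ..., g] = 0`. -/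
def IsAbelian (I : Submodule ℂ g) : Prop :=
  ∀ (y : Fin n → g) (v w : g), v ∈ I → w ∈ I → M.br (update (update y 0 v) 1 w) = 0

end MetricNLie


section AuxProof

lemma fin_zero_ne_one' {n : ℕ} [NeZero n] (hn : 2 ≤ n) : (0 : Fin n) ≠ 1 := by
  have h1 : ((1 : Fin n) : ℕ) = 1 := by
    show 1 % n = 1
    rw [Nat.mod_eq_of_lt (by omega)]
  intro h
  apply absurd (congrArg Fin.val h)
  simp [h1]
  omega

variable {n : ℕ} [NeZero n] {g : Type*} [AddCommGroup g] [Module ℂ g]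
  [FiniteDimensional ℂ g] (M : MetricNLie n g)

/-- Antisymmetry in positions 0 and 1. -/
lemma MetricNLie.antisym01 (hn : 2 ≤ n) (y : Fin n → g) (a b : g) :
    M.br (update (update y 0 a) 1 b) = - M.br (update (update y 0 b) 1 a) := by
  have h01 : (0 : Fin n) ≠ 1 := fin_zero_ne_one' hn
  set f : g → g → g := fun a b => M.br (update (update y 0 a) 1 b) with hf
  have hal : ∀ a a' b : g, f (a + a') b = f a b + f a' b := by
    intro a a' b
    simp only [hf]
    rw [Function.update_comm h01 (a + a') b y, M.br.map_update_add,
      Function.update_comm h01.symm b a y, Function.update_comm h01.symm b a' y]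
  have har : ∀ a b b' : g, f a (b + b') = f a b + f a b' := by
    intro a b b'
    simp only [hf]
    rw [M.br.map_update_add]
  have hdiag : ∀ a : g, f a a = 0 := by
    intro a
    apply M.alternating _ 0 1 h01
    simp [Function.update_of_ne h01]
  have hz : f (a + b) (a + b) = 0 := hdiag (a + b)
  rw [hal, har, har, hdiag, hdiag, zero_add, add_zero] at hz
  show f a b = - f b a
  exact eq_neg_of_add_eq_zero_left hz

end AuxProof

theorem isIdeal_iff_orth_le_centralizer {n : ℕ} [NeZero n] {g : Type*} [AddCommGroup g] [Module ℂ g]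
    [FiniteDimensional ℂ g] (M : MetricNLie n g) (hn : 2 ≤ n)
    (W : Submodule ℂ g) :
    M.IsIdeal W ↔ ∀ x ∈ orthB M.B W, x ∈ M.centralizer W := by
  have h01 : (0 : Fin n) ≠ 1 := fin_zero_ne_one' hn
  constructor
  · -- Ideal → W⊥ ⊆ centralizer
    intro hI x hx y w hw
    apply M.nondeg
    intro b
    rw [Function.update_comm h01 x w y, M.inv (update y 1 w) x b]
    have hswap : M.br (update (update y 1 w) 0 b)
        = - M.br (update (update y 1 b) 0 w) := by
      rw [← Function.update_comm h01 b w y, ← Function.update_comm h01 w b y]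
      exact M.antisym01 hn y b w
    have hWmem : M.br (update (update y 1 b) 0 w) ∈ W := hI (update y 1 b) w hw
    have hx0 := hx _ hWmem
    rw [hswap]
    simp only [map_neg, LinearMap.neg_apply, neg_neg]
    exact hx0
  · -- W⊥ ⊆ centralizer → Ideal
    intro hC y v hv
    have hrefl : M.B.IsRefl := by
      intro a b hab
      rw [M.symm]; exact hab
    have hnd : LinearMap.BilinForm.Nondegenerate M.B := hrefl.nondegenerate_iff_separatingLeft.mpr (fun a ha => M.nondeg a ha)
    have hdouble : LinearMap.BilinForm.orthogonal M.B (LinearMap.BilinForm.orthogonal M.B W) = W :=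
      LinearMap.BilinForm.orthogonal_orthogonal hnd hrefl W
    rw [← hdouble]
    intro x hx
    have hxorth : x ∈ orthB M.B W := fun w hw => hx w hw
    have hcent := hC x hxorth
    -- Key computation: B (br (update y 0 x)) v = 0
    have key2 : M.B (M.br (update y 0 x)) v = 0 := by
      have e1 : M.br (update y 0 x)
          = - M.br (update (update y 0 (y 1)) 1 x) := by
        have h2 : update (update y 0 x) 1 (y 1) = update y 0 x := by
          have h3 : y 1 = (update y 0 x) 1 := (Function.update_of_ne h01.symm x y).symm
          rw [h3, Function.update_eq_self]
        rw [← h2]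
        exact M.antisym01 hn y x (y 1)
      rw [e1]
      have e2 : update (update y 0 (y 1)) 1 x = update (update y 1 x) 0 (y 1) :=
        Function.update_comm h01 (y 1) x y
      rw [e2]
      simp only [map_neg, LinearMap.neg_apply]
      rw [M.inv (update y 1 x) (y 1) v]
      have e3 : M.br (update (update y 1 x) 0 v) = 0 := by
        rw [← Function.update_comm h01 v x y]
        rw [M.antisym01 hn y v x]
        rw [hcent y v hv, neg_zero]
      rw [e3]
      simp
    have key : M.B (M.br (update y 0 v)) x = 0 := by
      rw [M.inv y v x, key2, neg_zero]
    rw [M.symm] at key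
    exact key
end

section
/- Let (g, B) be a metric n-Lie algebra and I a non-degenerate abelian ideal of g. Then I is contained in the center C(g). -/
open Function Submodule

private lemma br_swap {n : ℕ} [NeZero n] {g : Type*} [AddCommGroup g] [Module ℂ g]
    [FiniteDimensional ℂ g] (M : MetricNLie n g) (x : Fin n → g) {i j : Fin n}
    (hij : i ≠ j) (a b : g) :
    M.br (update (update x i a) j b) = - M.br (update (update x i b) j a) := by
  have diag : ∀ c : g, M.br (update (update x i c) j c) = 0 := fun c =>
    M.alternating _ i j hij (by
      rw [Function.update_of_ne hij, Function.update_self, Function.update_self])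
  have h := diag (a + b)
  rw [M.br.map_update_add, Function.update_comm hij, M.br.map_update_add,
      Function.update_comm hij, M.br.map_update_add] at h
  have d1 : M.br (update (update x j a) i a) = 0 := by
    rw [← Function.update_comm hij]; exact diag a
  have d2 : M.br (update (update x j b) i b) = 0 := by
    rw [← Function.update_comm hij]; exact diag b
  rw [d1, d2, zero_add, add_zero] at h
  rw [Function.update_comm hij, Function.update_comm hij]
  exact eq_neg_of_add_eq_zero_right h

theorem nondeg_abelian_ideal_le_center {n : ℕ} [NeZero n] {g : Type*} [AddCommGroup g] [Module ℂ g]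
    [FiniteDimensional ℂ g] (M : MetricNLie n g) (hn : 2 ≤ n)
    (I : Submodule ℂ g) (hI : M.IsIdeal I) (hab : M.IsAbelian I)
    (hnd : I ⊓ orthB M.B I = ⊥) :
    I ≤ M.center := by
  intro v hv y
  have h01 : (0 : Fin n) ≠ 1 := by
    intro h
    have h' := congrArg Fin.val h
    rw [Fin.val_zero, Fin.val_one', Nat.mod_eq_of_lt (by omega : 1 < n)] at h'
    exact one_ne_zero h'.symm
  have hzI : M.br (update y 0 v) ∈ I := hI y v hv
  have horth : M.br (update y 0 v) ∈ orthB M.B I := by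
    intro w hw
    have e1 : update (update y 0 v) 1 (y 1) = update y 0 v := by
      rw [show y 1 = (update y 0 v) 1 from (Function.update_of_ne h01.symm v y).symm,
        Function.update_eq_self]
    have e2 : update (update y 0 (y 1)) 1 v = update (update y 1 v) 0 (y 1) :=
      Function.update_comm h01 (y 1) v y
    have e3 : M.br (update (update y 1 v) 0 w) = 0 := by
      rw [← Function.update_comm h01 w v y]
      exact hab y w v hw hv
    calc M.B w (M.br (update y 0 v))
        = M.B (M.br (update y 0 v)) w := M.symm _ _
      _ = M.B (M.br (update (update y 0 v) 1 (y 1))) w := by rw [e1]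
      _ = M.B (- M.br (update (update y 0 (y 1)) 1 v)) w := by
            rw [br_swap M y h01 v (y 1)]
      _ = - M.B (M.br (update (update y 1 v) 0 (y 1))) w := by rw [e2]; simp
      _ = M.B (M.br (update (update y 1 v) 0 w)) (y 1) := by
            rw [M.inv (update y 1 v) (y 1) w]; ring
      _ = 0 := by rw [e3]; simp
  have : M.br (update y 0 v) ∈ I ⊓ orthB M.B I := ⟨hzI, horth⟩
  rw [hnd] at this
  simpa using this
end

section
/- Let (g, B) be a metric n-Lie algebra with solvable radical r, and let I be an isomaximal ideal (an isotropic ideal maximal among isotropic ideals). Then r ∩ r⊥ ⊆ I ⊆ r. -/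
open Function Submodule

theorem isomaximal_between_rad_inf_orth_and_rad {n : ℕ} [NeZero n] {g : Type*} [AddCommGroup g] [Module ℂ g]
    [FiniteDimensional ℂ g] (M : MetricNLie n g) (hn : 2 ≤ n)
    (r I : Submodule ℂ g) (hr : M.IsRadical r)
    (hI : M.IsIdeal I) (hiso : M.Isotropic I)
    (hmax : ∀ J : Submodule ℂ g, M.IsIdeal J → M.Isotropic J → I ≤ J → J = I) :
    r ⊓ orthB M.B r ≤ I ∧ I ≤ r := by
  classical
  have h01 : (0 : Fin n) ≠ 1 := by
    intro h
    have := congrArg Fin.val h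
    simp [Fin.val_one', Nat.mod_eq_of_lt hn] at this
  -- skew symmetry in the first two slots
  have hswap : ∀ (y : Fin n → g) (a b : g),
      M.br (update (update y 0 a) 1 b) = - M.br (update (update y 0 b) 1 a) := by
    intro y a b
    have halt := M.alternating (update (update y 0 (a+b)) 1 (a+b)) 0 1 h01
      (by simp [Function.update_of_ne h01])
    have e1 : update (update y 0 (a+b)) 1 (a+b)
        = update (update y 1 (a+b)) 0 (a+b) := Function.update_comm h01 _ _ _
    rw [e1, M.br.map_update_add] at halt
    have e2 : ∀ c : g, update (update y 1 (a+b)) 0 c = update (update y 0 c) 1 (a+b) := by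
      intro c; exact (Function.update_comm h01 _ _ _).symm
    rw [e2 a, e2 b, M.br.map_update_add, M.br.map_update_add] at halt
    have z1 : M.br (update (update y 0 a) 1 a) = 0 :=
      M.alternating _ 0 1 h01 (by simp [Function.update_of_ne h01])
    have z2 : M.br (update (update y 0 b) 1 b) = 0 :=
      M.alternating _ 0 1 h01 (by simp [Function.update_of_ne h01])
    rw [z1, z2, zero_add, add_zero] at halt
    exact eq_neg_of_add_eq_zero_left halt
  -- isotropic ideals are abelian
  have habel : ∀ (y : Fin n → g) (v w : g), v ∈ I → w ∈ I →
      M.br (update (update y 0 v) 1 w) = 0 := by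
    intro y v w hv hw
    apply M.nondeg
    intro c
    have e : update (update y 0 v) 1 w = update (update y 1 w) 0 v :=
      Function.update_comm h01 _ _ _
    rw [e, M.inv]
    have e2 : update (update y 1 w) 0 c = update (update y 0 c) 1 w :=
      (Function.update_comm h01 _ _ _).symm
    rw [e2, hswap]
    have hmem : M.br (update (update y 0 w) 1 c) ∈ I := by
      have e3 : update (update y 0 w) 1 c = update (update y 1 c) 0 w :=
        Function.update_comm h01 _ _ _
      rw [e3]; exact hI _ _ hw
    simp [hiso _ hmem _ hv]
  -- I is solvable
  have hsolv : M.IsSolvable I := by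
    refine ⟨1, ?_⟩
    show M.bracketAll I = ⊥
    rw [MetricNLie.bracketAll, Submodule.span_eq_bot]
    rintro z ⟨y, hy, rfl⟩
    have e : y = update (update y 0 (y 0)) 1 (y 1) := by
      simp
    rw [e]
    exact habel _ _ _ (hy 0) (hy 1)
  have hIr : I ≤ r := hr.2.2 I hI hsolv
  refine ⟨?_, hIr⟩
  -- now show r ⊓ r^⊥ ≤ I
  set K : Submodule ℂ g := r ⊓ orthB M.B r with hK
  have hKmem : ∀ x ∈ K, x ∈ r ∧ ∀ w ∈ r, M.B w x = 0 := by
    intro x hx; exact ⟨hx.1, hx.2⟩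
  have hKideal : M.IsIdeal K := by
    intro y v hv
    obtain ⟨hv1, hv2⟩ := hKmem v hv
    refine ⟨hr.1 y v hv1, ?_⟩
    intro w hw
    rw [M.symm, M.inv]
    have : M.B (M.br (update y 0 w)) v = 0 := hv2 _ (hr.1 y w hw)
    simp [this]
  have hJideal : M.IsIdeal (I ⊔ K) := by
    intro y v hv
    rw [Submodule.mem_sup] at hv
    obtain ⟨a, ha, b, hb, rfl⟩ := hv
    rw [M.br.map_update_add]
    exact Submodule.add_mem _ (Submodule.mem_sup_left (hI y a ha))
      (Submodule.mem_sup_right (hKideal y b hb))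
  have hJiso : M.Isotropic (I ⊔ K) := by
    intro x hx y hy
    rw [Submodule.mem_sup] at hx hy
    obtain ⟨a, ha, b, hb, rfl⟩ := hx
    obtain ⟨c, hc, d, hd, rfl⟩ := hy
    have hac : M.B a c = 0 := hiso a ha c hc
    have had : M.B a d = 0 := (hKmem d hd).2 a (hIr ha)
    have hbc : M.B b c = 0 := by rw [M.symm]; exact (hKmem b hb).2 c (hIr hc)
    have hbd : M.B b d = 0 := (hKmem d hd).2 b (hKmem b hb).1
    simp [map_add, hac, had, hbc, hbd]
  have hJ : I ⊔ K = I := hmax _ hJideal hJiso le_sup_left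
  calc K ≤ I ⊔ K := le_sup_right
    _ = I := hJ
end

section
/- Let (g, B) be a metric n-Lie algebra. Then g decomposes as an orthogonal direct sum of ideals g = C₁ ⊕ g₁, where C₁ is either zero or a non-degenerate abelian ideal contained in the center, and g₁ is an ideal whose center is isotropic. -/
open Function Submodule

theorem orthogonal_decomposition_isotropic_center {n : ℕ} [NeZero n] {g : Type*} [AddCommGroup g] [Module ℂ g]
    [FiniteDimensional ℂ g] (M : MetricNLie n g) (hn : 2 ≤ n) :
    ∃ C₁ g₁ : Submodule ℂ g, M.IsIdeal C₁ ∧ M.IsIdeal g₁ ∧ IsCompl C₁ g₁ ∧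
      (∀ x ∈ C₁, ∀ y ∈ g₁, M.B x y = 0) ∧
      (C₁ = ⊥ ∨ (C₁ ⊓ orthB M.B C₁ = ⊥ ∧ M.IsAbelian C₁ ∧ C₁ ≤ M.center)) ∧
      M.Isotropic (M.center ⊓ g₁) := by
  classical
  have hrefl : (M.B : LinearMap.BilinForm ℂ g).IsRefl := fun a b h => by
    rw [M.symm]; exact h
  have horthB : ∀ V : Submodule ℂ g, orthB M.B V = LinearMap.BilinForm.orthogonal M.B V := by
    intro V
    ext x
    constructor
    · intro hx w hw; exact hx w hw
    · intro hx w hw; exact hx w hw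
  have h01 : (0 : Fin n) ≠ 1 := by
    intro h
    have h2 := congrArg Fin.val h
    rw [Fin.val_zero, Fin.val_one'] at h2
    rw [Nat.mod_eq_of_lt (by omega)] at h2
    omega
  set Z := M.center with hZ
  set W := Z ⊓ orthB M.B Z with hW
  obtain ⟨U, hU⟩ := Submodule.exists_isCompl W
  set C₁ := Z ⊓ U with hC₁
  have hC₁Z : C₁ ≤ Z := inf_le_left
  have hsup : W ⊔ C₁ = Z := by
    have hWZ : W ≤ Z := inf_le_left
    have := sup_inf_assoc_of_le (α := Submodule ℂ g) U hWZ
    rw [hU.sup_eq_top, top_inf_eq] at this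
    rw [hC₁, inf_comm Z U, ← this]
  have hdisj : C₁ ⊓ orthB M.B C₁ = ⊥ := by
    rw [eq_bot_iff]
    rintro x ⟨hx1, hx2⟩
    have hxZ : x ∈ Z := hx1.1
    have hxW : x ∈ W := by
      refine ⟨hxZ, ?_⟩
      intro z hz
      rw [← hsup] at hz
      obtain ⟨w, hw, c, hc, rfl⟩ := Submodule.mem_sup.1 hz
      have h1 : M.B w x = 0 := by rw [M.symm]; exact hw.2 x hxZ
      have h2 : M.B c x = 0 := hx2 c hc
      rw [map_add, LinearMap.add_apply, h1, h2, add_zero]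
    have hbot : x ∈ W ⊓ U := ⟨hxW, hx1.2⟩
    rw [hU.inf_eq_bot] at hbot
    exact hbot
  refine ⟨C₁, orthB M.B C₁, ?_, ?_, ?_, ?_, ?_, ?_⟩
  · -- C₁ ideal
    intro y v hv
    have : M.br (update y 0 v) = 0 := hC₁Z hv y
    rw [this]; exact Submodule.zero_mem _
  · -- orthB C₁ ideal
    intro y v hv w hw
    have h1 : M.B (M.br (update y 0 v)) w = - M.B (M.br (update y 0 w)) v := M.inv y v w
    rw [M.symm, h1, hC₁Z hw y, map_zero, LinearMap.zero_apply, neg_zero]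
  · -- IsCompl
    rw [horthB]
    rw [LinearMap.BilinForm.isCompl_orthogonal_iff_disjoint hrefl, disjoint_iff, ← horthB]
    exact hdisj
  · -- orthogonality
    intro x hx y hy
    exact hy x hx
  · -- right disjunct
    refine Or.inr ⟨hdisj, ?_, hC₁Z⟩
    intro y v w hv hw
    rw [update_comm h01 v w y]
    exact hC₁Z hv (update y 1 w)
  · -- isotropic
    rintro x ⟨hxZ, hxg₁⟩ y ⟨hyZ, _⟩
    rw [M.symm]
    rw [← hsup] at hyZ
    obtain ⟨w, hw, c, hc, rfl⟩ := Submodule.mem_sup.1 hyZ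
    have h1 : M.B (w + c) x = M.B w x + M.B c x := by
      rw [map_add, LinearMap.add_apply]
    have h2 : M.B w x = 0 := hrefl _ _ (hw.2 x hxZ)
    rw [h1, h2, hxg₁ c hc, add_zero]
end

section
/- Let g be an n-Lie algebra over ℂ of dimension n+k with 2 ≤ k ≤ n+1, possessing a non-degenerate symmetric invariant bilinear form B. If r is a solvable ideal of g of dimension n with [r, ..., r] ≠ 0 and [r, s, g, ..., g] = 0 for the complementary semisimple part s, then one derives a contradiction with the non-degeneracy of B; in particular, there is no basis e₁,...,eₙ of such an r with [e₁,...,eₙ] = e₁. -/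
open Function Submodule

lemma MetricNLie.swap01 {n : ℕ} [NeZero n] {g : Type*} [AddCommGroup g] [Module ℂ g]
    [FiniteDimensional ℂ g] (M : MetricNLie n g) (h01 : (0 : Fin n) ≠ 1)
    (x : Fin n → g) (a b : g) :
    M.br (update (update x 0 a) 1 b) = - M.br (update (update x 0 b) 1 a) := by
  have key : M.br (update (update x 0 (a + b)) 1 (a + b)) = 0 := by
    refine M.alternating _ 0 1 h01 ?_
    rw [Function.update_of_ne h01, Function.update_self, Function.update_self]
  have k1 : M.br (update (update x 0 (a + b)) 1 (a + b))
      = M.br (update (update x 0 a) 1 (a + b)) + M.br (update (update x 0 b) 1 (a + b)) := by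
    rw [Function.update_comm h01, M.br.map_update_add,
      Function.update_comm h01.symm, Function.update_comm h01.symm]
  rw [k1, M.br.map_update_add, M.br.map_update_add] at key
  have haa : M.br (update (update x 0 a) 1 a) = 0 := by
    refine M.alternating _ 0 1 h01 ?_
    rw [Function.update_of_ne h01, Function.update_self, Function.update_self]
  have hbb : M.br (update (update x 0 b) 1 b) = 0 := by
    refine M.alternating _ 0 1 h01 ?_
    rw [Function.update_of_ne h01, Function.update_self, Function.update_self]
  rw [haa, hbb, zero_add, add_zero] at key
  exact eq_neg_of_add_eq_zero_left key

theorem no_basis_with_bracket_first {n : ℕ} [NeZero n] {g : Type*} [AddCommGroup g] [Module ℂ g]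
    [FiniteDimensional ℂ g] (M : MetricNLie n g) (hn : 2 ≤ n)
    (k : ℕ) (hk2 : 2 ≤ k) (hkn : k ≤ n + 1)
    (hdim : Module.finrank ℂ g = n + k)
    (r s : Submodule ℂ g) (hrI : M.IsIdeal r) (hrs : M.IsSolvable r)
    (hrdim : Module.finrank ℂ r = n) (hr1 : M.bracketAll r ≠ ⊥)
    (hcompl : IsCompl r s)
    (hss : ∀ J : Submodule ℂ g, J ≤ s → M.IsIdeal J → M.IsSolvable J → J = ⊥)
    (hrsg : ∀ (y : Fin n → g) (a b : g), a ∈ r → b ∈ s →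
      M.br (update (update y 0 a) 1 b) = 0) :
    ¬ ∃ e : Fin n → g, LinearIndependent ℂ e ∧
      Submodule.span ℂ (Set.range e) = r ∧ M.br e = e 0 := by
  have h01 : (0 : Fin n) ≠ 1 := by
    intro h
    have := congrArg Fin.val h
    simp [Fin.val_one'] at this
    omega
  rintro ⟨e, hli, hspan, hbr⟩
  have he1r : e 1 ∈ r := hspan ▸ Submodule.subset_span ⟨1, rfl⟩
  -- bracket with anything in span {e 0}
  have hmem : ∀ b : g, M.br (update e 0 b) ∈ Submodule.span ℂ {e 0} := by
    intro b
    have hb : b ∈ r ⊔ s := by rw [hcompl.sup_eq_top]; trivial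
    rcases Submodule.mem_sup.mp hb with ⟨a, har, c, hcs, rfl⟩
    rw [M.br.map_update_add]
    have hc : M.br (update e 0 c) = 0 := by
      have : M.br (update e 0 c) = M.br (update (update e 0 c) 1 (e 1)) := by
        rw [show e 1 = (update e 0 c) 1 from (Function.update_of_ne h01.symm c e).symm,
          Function.update_eq_self]
      rw [this, M.swap01 h01, hrsg e (e 1) c he1r hcs, neg_zero]
    rw [hc, add_zero]
    rw [← hspan] at har
    clear hb
    induction har using Submodule.span_induction with
    | mem z hz =>
      rcases hz with ⟨i, rfl⟩
      by_cases hi : i = 0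
      · subst hi
        rw [Function.update_eq_self, hbr]
        exact Submodule.mem_span_singleton_self _
      · have : M.br (update e 0 (e i)) = 0 := by
          refine M.alternating _ 0 i (Ne.symm hi) ?_
          rw [Function.update_self, Function.update_of_ne hi]
        rw [this]; exact Submodule.zero_mem _
    | zero =>
      rw [show M.br (update e 0 (0:g)) = 0 from M.br.map_update_zero e 0]
      exact Submodule.zero_mem _
    | add u v _ _ hu hv => rw [M.br.map_update_add]; exact Submodule.add_mem _ hu hv
    | smul c u _ hu => rw [M.br.map_update_smul]; exact Submodule.smul_mem _ _ hu
  have hB00 : M.B (e 0) (e 0) = 0 := by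
    have := M.inv e (e 0) (e 0)
    rw [Function.update_eq_self, hbr] at this
    linear_combination this / 2
  have hBall : ∀ b : g, M.B (e 0) b = 0 := by
    intro b
    have hinv := M.inv e (e 0) b
    rw [Function.update_eq_self, hbr] at hinv
    rcases Submodule.mem_span_singleton.mp (hmem b) with ⟨t, ht⟩
    rw [hinv, ← ht, map_smul]
    simp [hB00]
  have := M.nondeg (e 0) hBall
  exact hli.ne_zero 0 this
end
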